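/- Let 0 < H₁ ≤ H_e < H₂, let A₁, A₂ ≥ 1, α > 0, P_c ≥ 0, and let P_max ≥ (A₁ − 1)/H₁ + A₁·(A₂ − 1)/H₂. Define the feasible set Π = {(p₁, p₂) ∈ ℝ₊² : p₁ + p₂ ≤ P_max, p₁ ≥ (A₁ − 1)·(p₂ + 1/H₁), p₂ ≥ (A₂ − 1)/H₂}, the objective Ψ(p₁, p₂) = (1/2)·log₂((1 + H₂·p₂)/(1 + H_e·p₂)) − α·(p₁ + p₂ + P_c), and the reduced single-variable function g(t) = (1/2)·log₂((1 + H₂·t)/(1 + H_e·t)) − α·(A₁·t + (A₁ − 1)/H₁ + P_c) on the interval I = [(A₂ − 1)/H₂, (P_max − (A₁ − 1)/H₁)/A₁]. Then the maximum of Ψ over Π is attained and equals the maximum of g over I; moreover, (p₁, p₂) maximizes Ψ over Π with p₁ = (A₁ − 1)·(p₂ + 1/H₁) if and only if p₂ maximizes g over I. -/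
import Mathlib


/-- Substituting the tight weak-user QoS constraint
p₁ = (A₁ − 1)·(p₂ + 1/H₁) reduces the two-variable SEE problem over Π to the
one-variable problem of maximizing g over I: both maxima are attained and equal,
and (p₁, p₂) with tight constraint maximizes Ψ over Π iff p₂ maximizes g over I. -/
theorem see_two_user_reduction_to_one_variable (H1 He H2 A1 A2 α Pc Pmax : ℝ)
    (hH1 : 0 < H1) (h1e : H1 ≤ He) (he2 : He < H2)
    (hA1 : 1 ≤ A1) (hA2 : 1 ≤ A2) (hα : 0 < α) (hPc : 0 ≤ Pc)
    (hPmax : (A1 - 1) / H1 + A1 * (A2 - 1) / H2 ≤ Pmax) :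
    letI Feas : Set (ℝ × ℝ) := {p | 0 ≤ p.1 ∧ 0 ≤ p.2 ∧ p.1 + p.2 ≤ Pmax ∧
      p.1 ≥ (A1 - 1) * (p.2 + 1 / H1) ∧ p.2 ≥ (A2 - 1) / H2}
    letI Ψ : ℝ × ℝ → ℝ := fun p =>
      (1/2) * Real.logb 2 ((1 + H2 * p.2) / (1 + He * p.2)) - α * (p.1 + p.2 + Pc)
    letI g : ℝ → ℝ := fun t =>
      (1/2) * Real.logb 2 ((1 + H2 * t) / (1 + He * t)) -
        α * (A1 * t + (A1 - 1) / H1 + Pc)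
    letI I : Set ℝ := Set.Icc ((A2 - 1) / H2) ((Pmax - (A1 - 1) / H1) / A1)
    (∃ Mv : ℝ, IsGreatest (Ψ '' Feas) Mv ∧ IsGreatest (g '' I) Mv) ∧
    (∀ p1 p2 : ℝ, p1 = (A1 - 1) * (p2 + 1 / H1) →
      (((p1, p2) ∈ Feas ∧ ∀ q ∈ Feas, Ψ q ≤ Ψ (p1, p2)) ↔
        (p2 ∈ I ∧ ∀ t ∈ I, g t ≤ g p2))) := by
  set Feas : Set (ℝ × ℝ) := {p | 0 ≤ p.1 ∧ 0 ≤ p.2 ∧ p.1 + p.2 ≤ Pmax ∧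
      p.1 ≥ (A1 - 1) * (p.2 + 1 / H1) ∧ p.2 ≥ (A2 - 1) / H2} with hFeasdef
  set Ψ : ℝ × ℝ → ℝ := fun p =>
      (1/2) * Real.logb 2 ((1 + H2 * p.2) / (1 + He * p.2)) - α * (p.1 + p.2 + Pc) with hΨdef
  set g : ℝ → ℝ := fun t =>
      (1/2) * Real.logb 2 ((1 + H2 * t) / (1 + He * t)) -
        α * (A1 * t + (A1 - 1) / H1 + Pc) with hgdef
  set I : Set ℝ := Set.Icc ((A2 - 1) / H2) ((Pmax - (A1 - 1) / H1) / A1) with hIdef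
  have hHe : 0 < He := lt_of_lt_of_le hH1 h1e
  have hH2 : 0 < H2 := hHe.trans he2
  have hA1pos : (0:ℝ) < A1 := one_pos.trans_le hA1
  have hL0 : 0 ≤ (A2 - 1) / H2 := div_nonneg (by linarith) hH2.le
  have hLU : (A2 - 1) / H2 ≤ (Pmax - (A1 - 1) / H1) / A1 := by
    rw [le_div_iff₀ hA1pos]
    have h : (A2 - 1) / H2 * A1 = A1 * (A2 - 1) / H2 := by ring
    linarith [h]
  -- for t in I, the tight point is feasible
  have hφmem : ∀ t ∈ I, ((A1 - 1) * (t + 1 / H1), t) ∈ Feas := by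
    intro t ht
    obtain ⟨h1, h2⟩ := Set.mem_Icc.mp ht
    have ht0 : 0 ≤ t := le_trans hL0 h1
    refine ⟨mul_nonneg (by linarith) (by positivity), ht0, ?_, le_refl _, h1⟩
    have h2' : t * A1 ≤ Pmax - (A1 - 1) / H1 := (le_div_iff₀ hA1pos).mp h2
    have hs : (A1 - 1) * (t + 1 / H1) + t = A1 * t + (A1 - 1) / H1 := by ring
    linarith
  -- projection: any feasible p has p.2 ∈ I and Ψ p ≤ g p.2
  have hΨle : ∀ p ∈ Feas, p.2 ∈ I ∧ Ψ p ≤ g p.2 := by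
    intro p hp
    obtain ⟨hp1, hp2, hps, hpt, hpl⟩ := hp
    have hs : (A1 - 1) * (p.2 + 1 / H1) = (A1 - 1) * p.2 + (A1 - 1) / H1 := by ring
    constructor
    · refine Set.mem_Icc.mpr ⟨hpl, ?_⟩
      rw [le_div_iff₀ hA1pos]
      linarith
    · show (1/2) * Real.logb 2 ((1 + H2 * p.2) / (1 + He * p.2)) - α * (p.1 + p.2 + Pc) ≤
        (1/2) * Real.logb 2 ((1 + H2 * p.2) / (1 + He * p.2)) -
          α * (A1 * p.2 + (A1 - 1) / H1 + Pc)
      have hle : A1 * p.2 + (A1 - 1) / H1 + Pc ≤ p.1 + p.2 + Pc := by linarith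
      have := mul_le_mul_of_nonneg_left hle hα.le
      linarith
  have hgΨ : ∀ t : ℝ, g t = Ψ ((A1 - 1) * (t + 1 / H1), t) := by
    intro t
    show (1/2) * Real.logb 2 ((1 + H2 * t) / (1 + He * t)) -
        α * (A1 * t + (A1 - 1) / H1 + Pc) =
      (1/2) * Real.logb 2 ((1 + H2 * t) / (1 + He * t)) -
        α * ((A1 - 1) * (t + 1 / H1) + t + Pc)
    ring
  -- continuity of g on I
  have hcont : ContinuousOn g I := by
    have hc1 : ContinuousOn (fun t : ℝ => (1 + H2 * t) / (1 + He * t)) I := by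
      apply ContinuousOn.div (by fun_prop) (by fun_prop)
      intro t ht
      have ht0 : 0 ≤ t := le_trans hL0 (Set.mem_Icc.mp ht).1
      have : 0 < 1 + He * t := by positivity
      exact ne_of_gt this
    have hc2 : ContinuousOn (fun t : ℝ => Real.logb 2 ((1 + H2 * t) / (1 + He * t))) I := by
      simp only [Real.logb]
      refine ContinuousOn.div_const ?_ _
      refine ContinuousOn.log hc1 ?_
      intro t ht
      have ht0 : 0 ≤ t := le_trans hL0 (Set.mem_Icc.mp ht).1
      have h1 : 0 < 1 + H2 * t := by positivity
      have h2 : 0 < 1 + He * t := by positivity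
      exact ne_of_gt (div_pos h1 h2)
    exact (continuousOn_const.mul hc2).sub (by fun_prop)
  have hIne : I.Nonempty := Set.nonempty_Icc.mpr hLU
  obtain ⟨t0, ht0I, ht0max⟩ := isCompact_Icc.exists_isMaxOn hIne hcont
  constructor
  · refine ⟨g t0, ⟨⟨_, hφmem t0 ht0I, (hgΨ t0).symm⟩, ?_⟩, ⟨⟨t0, ht0I, rfl⟩, ?_⟩⟩
    · rintro y ⟨p, hp, rfl⟩
      obtain ⟨hpI, hple⟩ := hΨle p hp
      exact hple.trans (ht0max hpI)
    · rintro y ⟨t, htI, rfl⟩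
      exact ht0max htI
  · intro p1 p2 hpt
    have heq : Ψ (p1, p2) = g p2 := by rw [hpt, ← hgΨ]
    constructor
    · rintro ⟨hmem, hub⟩
      have hpI := (hΨle _ hmem).1
      refine ⟨hpI, fun t htI' => ?_⟩
      calc g t = Ψ ((A1 - 1) * (t + 1 / H1), t) := hgΨ t
        _ ≤ Ψ (p1, p2) := hub _ (hφmem t htI')
        _ = g p2 := heq
    · rintro ⟨hpI, hub⟩
      have hmem : (p1, p2) ∈ Feas := by subst hpt; exact hφmem p2 hpI
      refine ⟨hmem, fun q hq => ?_⟩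
      obtain ⟨hqI, hqle⟩ := hΨle q hq
      exact hqle.trans ((hub _ hqI).trans_eq heq.symm)
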